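/- Consider a CTW instance with k = 2b + n jobs and b two-sided cables, let p be a permutation of {1, …, k} and let q = p⁻¹, so q(x) is the job at position x. Define the cost of the tour step from position x to position x+1 to be 1 if the job q(x) is one end of a two-sided cable whose other end has position strictly greater than x + 1 (i.e., the other end was not plugged before position x and is not plugged at position x+1), and 0 otherwise. Then the total tour cost ∑_{x=1}^{2b+n−1} 𝔠(q(x) → q(x+1)) equals S, the number of indices i ∈ {1, …, b} with |p(c_i) − p(c_{i+b})| > 1. Hence the storage cost S of the CTW problem can be expressed as the sum of tour-dependent edge costs of a traveling-salesperson tour. -/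

import Mathlib

/-- The storage cost `S` equals the total tour-dependent edge cost of the corresponding
traveling-salesperson tour: summing, over consecutive tour positions `x`, the cost `1`
exactly when the job at position `x` is one end of a two-sided cable whose other end has
position strictly greater than `x + 1`, yields the number of interrupted job pairs. -/
theorem ctw_S_eq_tour_cost (b n k : ℕ) (hk : k = 2 * b + n)
    (p q : ℕ → ℕ)
    (hp : Set.BijOn p (Set.Icc 1 k) (Set.Icc 1 k))
    (hq : Set.MapsTo q (Set.Icc 1 k) (Set.Icc 1 k))
    (hpq : ∀ x ∈ Set.Icc 1 k, p (q x) = x ∧ q (p x) = x) :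
    (∑ x ∈ Finset.Icc 1 (k - 1),
        if 1 ≤ q x ∧ q x ≤ 2 * b ∧
            x + 1 < p (if q x ≤ b then q x + b else q x - b)
        then 1 else 0)
      = ((Finset.Icc 1 b).filter fun i =>
          1 < max (p i) (p (i + b)) - min (p i) (p (i + b))).card := by
  classical
  have h2b : 2 * b ≤ k := by omega
  have hpm : ∀ j, 1 ≤ j → j ≤ k → 1 ≤ p j ∧ p j ≤ k := fun j h1 h2 => hp.1 ⟨h1, h2⟩
  have hpq1 : ∀ x, 1 ≤ x → x ≤ k → p (q x) = x := fun x h1 h2 => (hpq x ⟨h1, h2⟩).1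
  have hqp : ∀ j, 1 ≤ j → j ≤ k → q (p j) = j := fun j h1 h2 => (hpq j ⟨h1, h2⟩).2
  rw [← Finset.card_filter]
  apply Finset.card_nbij' (fun x => if q x ≤ b then q x else q x - b)
      (fun i => min (p i) (p (i + b)))
  · intro x hx
    simp only [Finset.mem_coe, Finset.mem_filter, Finset.mem_Icc] at hx ⊢
    obtain ⟨⟨hx1, hx2⟩, hq1, hq2, hpp⟩ := hx
    have hxk : x ≤ k := by omega
    have hpx : p (q x) = x := hpq1 x hx1 hxk
    by_cases hb : q x ≤ b
    · simp only [if_pos hb] at hpp ⊢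
      exact ⟨⟨hq1, hb⟩, by omega⟩
    · simp only [if_neg hb] at hpp ⊢
      have h1 : q x - b + b = q x := by omega
      refine ⟨⟨by omega, by omega⟩, ?_⟩
      rw [h1, hpx]
      omega
  · intro i hi
    simp only [Finset.mem_coe, Finset.mem_filter, Finset.mem_Icc] at hi ⊢
    obtain ⟨⟨hi1, hi2⟩, hint⟩ := hi
    have hik : i ≤ k := by omega
    have hibk : i + b ≤ k := by omega
    have hpi := hpm i hi1 hik
    have hpib := hpm (i + b) (by omega) hibk
    rcases le_or_gt (p i) (p (i + b)) with hle | hlt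
    · have hxm : min (p i) (p (i + b)) = p i := min_eq_left hle
      rw [hxm]
      have hqx : q (p i) = i := hqp i hi1 hik
      refine ⟨⟨by omega, by omega⟩, ?_⟩
      rw [hqx, if_pos hi2]
      refine ⟨hi1, by omega, ?_⟩
      omega
    · have hxm : min (p i) (p (i + b)) = p (i + b) := min_eq_right hlt.le
      rw [hxm]
      have hqx : q (p (i + b)) = i + b := hqp (i + b) (by omega) hibk
      have hnb : ¬ i + b ≤ b := by omega
      refine ⟨⟨by omega, by omega⟩, ?_⟩
      rw [hqx, if_neg hnb]
      have : i + b - b = i := by omega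
      rw [this]
      refine ⟨by omega, by omega, ?_⟩
      omega
  · intro x hx
    simp only [Finset.mem_coe, Finset.mem_filter, Finset.mem_Icc] at hx
    obtain ⟨⟨hx1, hx2⟩, hq1, hq2, hpp⟩ := hx
    have hxk : x ≤ k := by omega
    have hpx : p (q x) = x := hpq1 x hx1 hxk
    by_cases hb : q x ≤ b
    · simp only [if_pos hb] at hpp ⊢
      rw [hpx]
      omega
    · simp only [if_neg hb] at hpp ⊢
      have h1 : q x - b + b = q x := by omega
      rw [h1, hpx]
      omega
  · intro i hi
    simp only [Finset.mem_coe, Finset.mem_filter, Finset.mem_Icc] at hi ⊢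
    obtain ⟨⟨hi1, hi2⟩, hint⟩ := hi
    have hik : i ≤ k := by omega
    have hibk : i + b ≤ k := by omega
    rcases le_or_gt (p i) (p (i + b)) with hle | hlt
    · rw [min_eq_left hle, hqp i hi1 hik, if_pos hi2]
    · rw [min_eq_right hlt.le, hqp (i + b) (by omega) hibk,
        if_neg (by omega : ¬ i + b ≤ b)]
      omega
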